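/- For integers k ≥ 1 and n ≥ k+1, op_{n,k} = Σ_{i=0}^{n−k−1} c_i · (op_{n−i,k} − op_{n−i,k}^1), where c_i is the i-th Catalan number; equivalently, op_{n,k}^1 = Σ_{i=1}^{n−k−1} c_i · (op_{n−i,k} − op_{n−i,k}^1). -/

import Mathlib

/-- The first unoccupied parking space `j` with `p ≤ j ≤ n`, if any. -/
def firstFree (n : ℕ) (occ : Finset ℕ) (p : ℕ) : Option ℕ :=
  (List.range' p (n + 1 - p)).find? (fun j => decide (j ∉ occ))

/-- Number of cars that fail to park, processing the preference list in order,
given the set of already occupied spaces. -/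
def flawsFrom (n : ℕ) : List ℕ → Finset ℕ → ℕ
  | [], _ => 0
  | p :: rest, occ =>
    match firstFree n occ p with
    | none => flawsFrom n rest occ + 1
    | some j => flawsFrom n rest (insert j occ)

/-- The number of flaws (unparked cars) of a preference list of length `n`. -/
def flaws (n : ℕ) (a : List ℕ) : ℕ := flawsFrom n a ∅

/-- A preference set of length `n`: a list of length `n` with entries in `{1, …, n}`. -/
def IsPrefSet (n : ℕ) (a : List ℕ) : Prop :=
  a.length = n ∧ ∀ x ∈ a, 1 ≤ x ∧ x ≤ n

/-- An ordered preference set of length `n`: a nondecreasing preference set. -/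
def IsOrderedPrefSet (n : ℕ) (a : List ℕ) : Prop :=
  IsPrefSet n a ∧ a.Pairwise (· ≤ ·)

/-- `op_{n,≥k}`: number of ordered preference sets of length `n` with at least `k` flaws. -/
noncomputable def opGe (n k : ℕ) : ℕ :=
  {a : List ℕ | IsOrderedPrefSet n a ∧ k ≤ flaws n a}.ncard

/-- `op_{n,≤k}`: number of ordered preference sets of length `n` with at most `k` flaws. -/
noncomputable def opLe (n k : ℕ) : ℕ :=
  {a : List ℕ | IsOrderedPrefSet n a ∧ flaws n a ≤ k}.ncard

/-- `op_{n,k}`: number of ordered preference sets of length `n` with exactly `k` flaws. -/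
noncomputable def opEq (n k : ℕ) : ℕ :=
  {a : List ℕ | IsOrderedPrefSet n a ∧ flaws n a = k}.ncard

/-- `op_{n,≥k,≤l}`: at least `k` flaws, every entry at most `l`. -/
noncomputable def opGeLe (n k l : ℕ) : ℕ :=
  {a : List ℕ | IsOrderedPrefSet n a ∧ k ≤ flaws n a ∧ ∀ x ∈ a, x ≤ l}.ncard

/-- `op_{n,≥k,≤l}^m`: at least `k` flaws, every entry at most `l`, leading term `m`. -/
noncomputable def opGeLeLead (n k l m : ℕ) : ℕ :=
  {a : List ℕ | IsOrderedPrefSet n a ∧ k ≤ flaws n a ∧ (∀ x ∈ a, x ≤ l) ∧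
    a.head? = some m}.ncard

/-- `op_{n,k,≤l}^m`: exactly `k` flaws, every entry at most `l`, leading term `m`. -/
noncomputable def opEqLeLead (n k l m : ℕ) : ℕ :=
  {a : List ℕ | IsOrderedPrefSet n a ∧ flaws n a = k ∧ (∀ x ∈ a, x ≤ l) ∧
    a.head? = some m}.ncard

/-- `op_{n,k}^m`: exactly `k` flaws, leading term `m`. -/
noncomputable def opLead (n k m : ℕ) : ℕ :=
  {a : List ℕ | IsOrderedPrefSet n a ∧ flaws n a = k ∧ a.head? = some m}.ncard

/-- `op_{n,k,=l}^m`: exactly `k` flaws, maximal entry exactly `l`, leading term `m`. -/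
noncomputable def opMaxLead (n k l m : ℕ) : ℕ :=
  {a : List ℕ | IsOrderedPrefSet n a ∧ flaws n a = k ∧ (∀ x ∈ a, x ≤ l) ∧ l ∈ a ∧
    a.head? = some m}.ncard

/-- Binomial coefficient `C(a, b)` with an integer lower index, which is `0`
when `b < 0` (the standard convention). -/
def chooseInt (a : ℕ) (b : ℤ) : ℕ := if 0 ≤ b then a.choose b.toNat else 0



/-- simplified parking simulation for sorted lists: `t` = largest occupied spot. -/
def sim (n : ℕ) : List ℕ → ℕ → ℕ
  | [], _ => 0
  | p :: rest, t => if max p (t+1) ≤ n then sim n rest (max p (t+1)) else sim n rest t + 1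

lemma find?_range'_some {q : ℕ → Bool} {s : ℕ} : ∀ {p len : ℕ}, p ≤ s → s < p + len →
    (∀ j, p ≤ j → j < s → q j = false) → q s = true →
    (List.range' p len).find? q = some s := by
  intro p len
  induction len generalizing p with
  | zero => omega
  | succ m ih =>
    intro h1 h2 h3 h4
    rw [List.range'_succ, List.find?_cons]
    rcases eq_or_lt_of_le h1 with rfl | hlt
    · simp [h4]
    · rw [h3 p le_rfl hlt]
      exact ih hlt (by omega) (fun j hj hj2 => h3 j (by omega) hj2) h4

lemma firstFree_eq (n : ℕ) (occ : Finset ℕ) (p t : ℕ)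
    (hinv : ∀ j, p ≤ j → (j ∈ occ ↔ j ≤ t)) :
    firstFree n occ p = if max p (t+1) ≤ n then some (max p (t+1)) else none := by
  set s := max p (t+1) with hs
  by_cases hsn : s ≤ n
  · rw [if_pos hsn]
    apply find?_range'_some (by omega) (by omega)
    · intro j hj1 hj2
      simp only [decide_eq_false_iff_not, not_not]
      exact (hinv j hj1).2 (by omega)
    · simp only [decide_eq_true_eq]
      intro hmem
      have := (hinv s (by omega)).1 hmem
      omega
  · rw [if_neg hsn]
    unfold firstFree
    rw [List.find?_eq_none]
    intro j hj
    rw [List.mem_range'_1] at hj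
    simp only [decide_eq_true_eq, not_not]
    exact (hinv j hj.1).2 (by omega)

lemma flawsFrom_eq_sim (n : ℕ) : ∀ (l : List ℕ) (occ : Finset ℕ) (t p0 : ℕ),
    l.Pairwise (· ≤ ·) → (∀ x ∈ l, p0 ≤ x) → (∀ j, p0 ≤ j → (j ∈ occ ↔ j ≤ t)) →
    flawsFrom n l occ = sim n l t := by
  intro l
  induction l with
  | nil => intros; rfl
  | cons p rest ih =>
    intro occ t p0 hsort hlb hinv
    rw [List.pairwise_cons] at hsort
    have hp0 : p0 ≤ p := hlb p (by simp)
    have hinv' : ∀ j, p ≤ j → (j ∈ occ ↔ j ≤ t) := fun j hj => hinv j (le_trans hp0 hj)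
    have hff := firstFree_eq n occ p t hinv'
    by_cases hsn : max p (t+1) ≤ n
    · rw [if_pos hsn] at hff
      rw [flawsFrom, hff, sim, if_pos hsn]
      apply ih _ _ p hsort.2 hsort.1
      intro j hj
      simp only [Finset.mem_insert]
      constructor
      · rintro (rfl | hmem)
        · exact le_rfl
        · have := (hinv' j hj).1 hmem; omega
      · intro hle
        rcases Nat.lt_or_ge j (max p (t+1)) with h | h
        · right; exact (hinv' j hj).2 (by omega)
        · left; omega
    · rw [if_neg hsn] at hff
      rw [flawsFrom, hff]
      rw [show sim n (p :: rest) t = sim n rest t + 1 by rw [sim, if_neg hsn]]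
      show flawsFrom n rest occ + 1 = sim n rest t + 1
      congr 1
      exact ih occ t p hsort.2 hsort.1 hinv'

lemma flaws_eq_sim (n : ℕ) (a : List ℕ) (hsort : a.Pairwise (· ≤ ·))
    (hlb : ∀ x ∈ a, 1 ≤ x) : flaws n a = sim n a 0 := by
  apply flawsFrom_eq_sim n a ∅ 0 1 hsort hlb
  intro j hj
  simp; omega


/-- the spot where the `j`-th car (0-indexed) of `l` parks, starting with last spot `t`. -/
def spots : List ℕ → ℕ → ℕ → ℕ
  | [], t, j => t + j + 1
  | p :: _rest, t, 0 => max p (t+1)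
  | p :: rest, t, j+1 => spots rest (max p (t+1)) j

lemma spots_lb (p' : ℕ) : ∀ (l : List ℕ) (t j : ℕ), (∀ x ∈ l, p' ≤ x) → j < l.length →
    max p' (t+1) + j ≤ spots l t j := by
  intro l
  induction l with
  | nil => intro t j _ h; simp at h
  | cons p rest ih =>
    intro t j hlb hj
    match j with
    | 0 => have := hlb p (by simp); simp [spots]; omega
    | j+1 =>
      have h1 := ih (max p (t+1)) j (fun x hx => hlb x (by simp [hx])) (by simpa using hj)
      have hp : p' ≤ p := hlb p (by simp)
      show max p' (t+1) + (j+1) ≤ spots rest (max p (t+1)) j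
      omega

lemma spots_succ : ∀ (l : List ℕ) (t j : ℕ), spots l t j + 1 ≤ spots l t (j+1) := by
  intro l
  induction l with
  | nil => intro t j; simp [spots]
  | cons p rest ih =>
    intro t j
    match j with
    | 0 =>
      show max p (t+1) + 1 ≤ spots rest (max p (t+1)) 0
      match rest with
      | [] => simp [spots]
      | q :: rest' =>
        show max p (t+1) + 1 ≤ max q (max p (t+1) + 1)
        omega
    | j+1 => exact ih (max p (t+1)) j

lemma spots_mono (l : List ℕ) (t : ℕ) {i j : ℕ} (h : i ≤ j) : spots l t i ≤ spots l t j := by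
  induction j with
  | zero => have : i = 0 := by omega
            subst this; rfl
  | succ m ihm =>
    rcases Nat.lt_or_ge i (m+1) with h' | h'
    · exact le_trans (ihm (by omega)) (by have := spots_succ l t m; omega)
    · have : i = m + 1 := by omega
      subst this; rfl

lemma sup_range_succ_bot (f : ℕ → ℕ) (m : ℕ) :
    (Finset.range (m+1)).sup f = max (f 0) ((Finset.range m).sup (fun i => f (i+1))) := by
  induction m with
  | zero => simp
  | succ m ih =>
    rw [Finset.range_add_one, Finset.sup_insert, ih, Finset.range_add_one, Finset.sup_insert]
    simp [max_assoc, max_comm, max_left_comm]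

lemma spots_closed : ∀ (l : List ℕ) (t j : ℕ), j < l.length →
    spots l t j = max (t + j + 1) ((Finset.range (j+1)).sup fun m => l.getD m 0 + (j - m)) := by
  intro l
  induction l with
  | nil => intro t j h; simp at h
  | cons p rest ih =>
    intro t j hj
    match j with
    | 0 =>
      show max p (t+1) = _
      simp
      omega
    | j+1 =>
      have h1 := ih (max p (t+1)) j (by simpa using hj)
      show spots rest (max p (t+1)) j = _
      rw [h1, sup_range_succ_bot (fun m => (p :: rest).getD m 0 + (j + 1 - m)) (j+1)]
      simp only [List.getD_cons_succ, Nat.add_sub_add_right, List.getD_cons_zero, Nat.sub_zero]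
      omega

lemma sim_eq_card (n : ℕ) : ∀ (l : List ℕ) (t : ℕ), l.Pairwise (· ≤ ·) →
    sim n l t = ((Finset.range l.length).filter (fun j => n < spots l t j)).card := by
  intro l
  induction l with
  | nil => intros; simp [sim]
  | cons p rest ih =>
    intro t hsort
    rw [List.pairwise_cons] at hsort
    by_cases hsn : max p (t+1) ≤ n
    · rw [sim, if_pos hsn, ih (max p (t+1)) hsort.2]
      apply Finset.card_nbij (fun j => j + 1)
      · intro j hj
        simp only [Finset.mem_coe, Finset.mem_filter, Finset.mem_range] at hj ⊢
        exact ⟨by simp; omega, hj.2⟩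
      · intro j hj j' hj' h; simp only at h; omega
      · intro j hj
        simp only [Finset.coe_filter, Finset.mem_range, Set.mem_setOf_eq, Set.mem_image] at hj ⊢
        match j, hj with
        | 0, hj => exact absurd hj.2 (by simp [spots]; omega)
        | j+1, hj => exact ⟨j, ⟨by simp at hj; omega, hj.2⟩, rfl⟩
    · rw [sim, if_neg hsn, ih t hsort.2]
      have hall : ∀ j < rest.length, n < spots rest t j := by
        intro j hj
        have := spots_lb p rest t j hsort.1 hj
        omega
      have hall2 : ∀ j < (p :: rest).length, n < spots (p :: rest) t j := by
        intro j hj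
        match j with
        | 0 => simpa [spots] using by omega
        | j+1 =>
          show n < spots rest (max p (t+1)) j
          have h1 := spots_lb p rest (max p (t+1)) j hsort.1 (by simpa using hj)
          omega
      rw [Finset.filter_true_of_mem (by intro j hj; simpa using hall j (by simpa using hj)),
          Finset.filter_true_of_mem (by intro j hj; simpa using hall2 j (by simpa using hj))]
      simp

lemma card_filter_upward (n k : ℕ) (D : ℕ → Prop) [DecidablePred D]
    (hmono : ∀ j, D j → D (j+1)) (hk : 1 ≤ k) (hkn : k < n) :
    (((Finset.range n).filter (fun j => D j)).card = k ↔ (¬ D (n-k-1) ∧ D (n-k))) := by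
  have hup : ∀ i j, i ≤ j → D i → D j := by
    intro i j hij hd
    induction j, hij using Nat.le_induction with
    | base => exact hd
    | succ m _ ihm => exact hmono m ihm
  constructor
  · intro hcard
    constructor
    · intro hD
      have hsub : Finset.Ico (n-k-1) n ⊆ (Finset.range n).filter (fun j => D j) := by
        intro j hj
        rw [Finset.mem_Ico] at hj
        rw [Finset.mem_filter, Finset.mem_range]
        exact ⟨hj.2, hup _ _ (by omega) hD⟩
      have := Finset.card_le_card hsub
      rw [Nat.card_Ico] at this
      omega
    · by_contra hD
      have hsub : (Finset.range n).filter (fun j => D j) ⊆ Finset.Ico (n-k+1) n := by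
        intro j hj
        rw [Finset.mem_filter, Finset.mem_range] at hj
        rw [Finset.mem_Ico]
        refine ⟨?_, hj.1⟩
        by_contra h
        exact hD (hup _ _ (by omega) hj.2)
      have := Finset.card_le_card hsub
      rw [Nat.card_Ico] at this
      omega
  · rintro ⟨h1, h2⟩
    have : (Finset.range n).filter (fun j => D j) = Finset.Ico (n-k) n := by
      ext j
      rw [Finset.mem_filter, Finset.mem_range, Finset.mem_Ico]
      constructor
      · rintro ⟨hj, hD⟩
        refine ⟨?_, hj⟩
        by_contra h
        exact h1 (hup _ _ (by omega) hD)
      · rintro ⟨hj1, hj2⟩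
        exact ⟨hj2, hup _ _ hj1 h2⟩
    rw [this, Nat.card_Ico]
    omega

/-- the inequality characterization of having exactly `k ≥ 1` flaws, for sorted lists. -/
def Good (k n : ℕ) (a : List ℕ) : Prop :=
  (∀ m, m < n - k → a.getD m 0 ≤ k+1+m) ∧ (∃ m, m < n - k ∧ a.getD m 0 = k+m+1)

instance (k n : ℕ) (a : List ℕ) : Decidable (Good k n a) := by unfold Good; infer_instance

lemma sim_eq_iff_good (n k : ℕ) (hk : 1 ≤ k) (hn : k+1 ≤ n) (a : List ℕ)
    (hlen : a.length = n) (hent : ∀ x ∈ a, 1 ≤ x ∧ x ≤ n) (hsort : a.Pairwise (· ≤ ·)) :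
    sim n a 0 = k ↔ Good k n a := by
  have hentD : ∀ m, m < n → 1 ≤ a.getD m 0 ∧ a.getD m 0 ≤ n := by
    intro m hm
    have hm' : m < a.length := by omega
    rw [List.getD_eq_getElem a 0 hm']
    exact hent _ (List.getElem_mem hm')
  rw [sim_eq_card n a 0 hsort, hlen]
  rw [card_filter_upward n k (fun j => n < spots a 0 j)
    (fun j hj => by have := spots_succ a 0 j; omega) hk (by omega)]
  have e1 : ¬ n < spots a 0 (n-k-1) ↔ ∀ m, m < n - k → a.getD m 0 ≤ k+1+m := by
    rw [not_lt, spots_closed a 0 (n-k-1) (by omega)]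
    rw [max_le_iff, Finset.sup_le_iff]
    constructor
    · rintro ⟨-, h⟩ m hm
      have := h m (Finset.mem_range.mpr (by omega))
      omega
    · intro h
      refine ⟨by omega, fun m hm => ?_⟩
      rw [Finset.mem_range] at hm
      have := h m (by omega)
      omega
  have e2' : n < spots a 0 (n-k) ↔ ∃ m, m ≤ n - k ∧ n < a.getD m 0 + (n - k - m) := by
    rw [spots_closed a 0 (n-k) (by omega)]
    constructor
    · rintro h
      rcases lt_max_iff.mp h with h | h
      · omega
      · rcases Finset.lt_sup_iff.mp h with ⟨m, hm, hm2⟩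
        exact ⟨m, by rw [Finset.mem_range] at hm; omega, hm2⟩
    · rintro ⟨m, hm1, hm2⟩
      apply lt_max_iff.mpr
      right
      exact Finset.lt_sup_iff.mpr ⟨m, Finset.mem_range.mpr (by omega), hm2⟩
  constructor
  · rintro ⟨h1, h2⟩
    have h1' := e1.mp h1
    refine ⟨h1', ?_⟩
    rcases e2'.mp h2 with ⟨m, hm1, hm2⟩
    rcases Nat.lt_or_ge m (n-k) with hmlt | hmge
    · exact ⟨m, hmlt, by have := h1' m hmlt; omega⟩
    · have : m = n - k := by omega
      subst this
      have := (hentD (n-k) (by omega)).2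
      omega
  · rintro ⟨h1, m, hm1, hm2⟩
    exact ⟨e1.mpr h1, e2'.mpr ⟨m, by omega, by omega⟩⟩

/-- all lists of length `n` with entries in `[1, hi]`. -/
def listsF : ℕ → ℕ → Finset (List ℕ)
  | 0, _ => {[]}
  | n+1, hi => ((Finset.Icc 1 hi) ×ˢ listsF n hi).image fun x => x.1 :: x.2

lemma mem_listsF : ∀ {n hi : ℕ} {a : List ℕ},
    a ∈ listsF n hi ↔ (a.length = n ∧ ∀ x ∈ a, 1 ≤ x ∧ x ≤ hi) := by
  intro n
  induction n with
  | zero =>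
    intro hi a
    simp only [listsF, Finset.mem_singleton]
    constructor
    · rintro rfl; simp
    · rintro ⟨h, -⟩; exact List.length_eq_zero_iff.mp h
  | succ m ih =>
    intro hi a
    simp only [listsF, Finset.mem_image, Finset.mem_product, Finset.mem_Icc]
    constructor
    · rintro ⟨⟨x, l⟩, ⟨hx, hl⟩, rfl⟩
      rw [ih] at hl
      refine ⟨by simp [hl.1], ?_⟩
      intro y hy
      rcases List.mem_cons.mp hy with rfl | hy
      · exact hx
      · exact hl.2 y hy
    · rintro ⟨hlen, hent⟩
      match a with
      | [] => simp at hlen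
      | x :: l =>
        refine ⟨(x, l), ⟨hent x (by simp), ih.mpr ⟨by simpa using hlen, fun y hy => hent y (by simp [hy])⟩⟩, rfl⟩

lemma getD_append_lt (p l : List ℕ) (m : ℕ) (h : m < p.length) :
    (p ++ l).getD m 0 = p.getD m 0 := by
  rw [List.getD_eq_getElem _ _ (by simp; omega), List.getD_eq_getElem _ _ h,
    List.getElem_append_left h]

lemma getD_append_ge (p l : List ℕ) (m : ℕ) (h : p.length ≤ m) (h2 : m < p.length + l.length) :
    (p ++ l).getD m 0 = l.getD (m - p.length) 0 := by
  rw [List.getD_eq_getElem _ _ (by simp; omega), List.getD_eq_getElem _ _ (by omega),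
    List.getElem_append_right h]

lemma getD_map_add (c : ℕ) (q : List ℕ) (m : ℕ) (h : m < q.length) :
    (q.map (· + c)).getD m 0 = q.getD m 0 + c := by
  rw [List.getD_eq_getElem _ _ (by simpa using h), List.getD_eq_getElem _ _ h, List.getElem_map]

lemma getD_map_sub (c : ℕ) (q : List ℕ) (m : ℕ) (h : m < q.length) :
    (q.map (· - c)).getD m 0 = q.getD m 0 - c := by
  rw [List.getD_eq_getElem _ _ (by simpa using h), List.getD_eq_getElem _ _ h, List.getElem_map]

lemma getD_take (a : List ℕ) (i m : ℕ) (h : m < i) (h2 : i ≤ a.length) :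
    (a.take i).getD m 0 = a.getD m 0 := by
  rw [List.getD_eq_getElem _ _ (by simp; omega), List.getD_eq_getElem _ _ (by omega),
    List.getElem_take]

lemma getD_drop (a : List ℕ) (i m : ℕ) (h : i + m < a.length) :
    (a.drop i).getD m 0 = a.getD (i + m) 0 := by
  rw [List.getD_eq_getElem _ _ (by simp; omega), List.getD_eq_getElem _ _ (by omega),
    List.getElem_drop]

lemma forall_mem_iff_getD {P : ℕ → Prop} {l : List ℕ} :
    (∀ x ∈ l, P x) ↔ ∀ m, m < l.length → P (l.getD m 0) := by
  constructor
  · intro h m hm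
    rw [List.getD_eq_getElem _ _ hm]
    exact h _ (List.getElem_mem hm)
  · intro h x hx
    rcases List.mem_iff_getElem.mp hx with ⟨i, hi, rfl⟩
    have := h i hi
    rwa [List.getD_eq_getElem _ _ hi] at this

lemma sorted_getD_mono {l : List ℕ} (hs : l.Pairwise (· ≤ ·)) {i j : ℕ} (hij : i ≤ j)
    (hj : j < l.length) : l.getD i 0 ≤ l.getD j 0 := by
  rw [List.getD_eq_getElem _ _ (by omega), List.getD_eq_getElem _ _ hj]
  rcases eq_or_lt_of_le hij with rfl | h
  · exact le_rfl
  · exact List.pairwise_iff_getElem.mp hs i j (by omega) hj h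

/-- staircase sequences: ordered parking functions of length `i`. -/
def st (i : ℕ) : Finset (List ℕ) :=
  (listsF i i).filter (fun a => a.Pairwise (· ≤ ·) ∧ ∀ m, m < i → a.getD m 0 ≤ m + 1)

lemma mem_st {i : ℕ} {a : List ℕ} : a ∈ st i ↔
    (a.length = i ∧ ∀ x ∈ a, 1 ≤ x ∧ x ≤ i) ∧ a.Pairwise (· ≤ ·) ∧
      ∀ m, m < i → a.getD m 0 ≤ m + 1 := by
  rw [st, Finset.mem_filter, mem_listsF]

/-- the position of the last "touch" `a.getD (j-1) 0 = j` of a staircase sequence. -/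
def lastTouch (N : ℕ) (a : List ℕ) : ℕ :=
  Nat.findGreatest (fun j => 1 ≤ j ∧ a.getD (j-1) 0 = j) N

lemma st_fiber_card (n : ℕ) (j : ℕ) (hj : j ∈ Finset.Icc 1 (n+1)) :
    ((st (n+1)).filter (fun a => lastTouch (n+1) a = j)).card
      = ((st (j-1)) ×ˢ (st (n+1-j))).card := by
  rw [Finset.mem_Icc] at hj
  symm
  apply Finset.card_nbij' (fun x => x.1 ++ j :: (x.2.map (· + (j-1))))
    (fun a => (a.take (j-1), (a.drop j).map (· - (j-1))))
  · -- forward membership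
    rintro ⟨p, q⟩ hpq
    rw [Finset.mem_coe, Finset.mem_product] at hpq
    obtain ⟨⟨hplen, hpent⟩, hpsort, hpst⟩ := mem_st.mp hpq.1
    obtain ⟨⟨hqlen, hqent⟩, hqsort, hqst⟩ := mem_st.mp hpq.2
    dsimp only at hplen hpent hpsort hpst hqlen hqent hqsort hqst ⊢
    set a := p ++ j :: (q.map (· + (j-1))) with ha
    have hqstD : ∀ m, m < n+1-j → q.getD m 0 ≤ m + 1 := hqst
    have hqentD := forall_mem_iff_getD.mp hqent
    have hpentD := forall_mem_iff_getD.mp hpent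
    have halen : a.length = n + 1 := by simp [ha, hplen, hqlen]; omega
    have hget : ∀ m, m < n + 1 →
        (m < j - 1 → a.getD m 0 = p.getD m 0) ∧
        (m = j - 1 → a.getD m 0 = j) ∧
        (j ≤ m → a.getD m 0 = q.getD (m - j) 0 + (j-1)) := by
      intro m hm
      refine ⟨?_, ?_, ?_⟩
      · intro h; rw [ha, getD_append_lt _ _ _ (by omega)]
      · rintro rfl
        rw [ha, getD_append_ge _ _ _ (by omega) (by simp only [List.length_append, List.length_cons, List.length_map, hplen, hqlen]; omega), hplen]
        simp
      · intro h
        rw [ha, getD_append_ge _ _ _ (by omega) (by simp only [List.length_append, List.length_cons, List.length_map, hplen, hqlen]; omega), hplen]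
        have : m - (j-1) = (m - j) + 1 := by omega
        rw [this, List.getD_cons_succ, getD_map_add _ _ _ (by omega)]
    have hstair : ∀ m, m < n + 1 → a.getD m 0 ≤ m + 1 := by
      intro m hm
      rcases Nat.lt_trichotomy m (j-1) with h | h | h
      · have := (hget m hm).1 h
        have := hpst m (by omega)
        omega
      · have := (hget m hm).2.1 h
        omega
      · have hjm : j ≤ m := by omega
        have := (hget m hm).2.2 hjm
        have := hqstD (m - j) (by omega)
        omega
    have hmem : a ∈ st (n+1) := by
      rw [mem_st]
      refine ⟨⟨halen, ?_⟩, ?_, hstair⟩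
      · rw [forall_mem_iff_getD]
        intro m hm
        rw [halen] at hm
        rcases Nat.lt_trichotomy m (j-1) with h | h | h
        · have := (hget m hm).1 h
          have := hpentD m (by omega)
          omega
        · have := (hget m hm).2.1 h; omega
        · have := (hget m hm).2.2 (by omega)
          have := hqentD (m - j) (by omega)
          omega
      · rw [ha, List.pairwise_append]
        have hmapmem : ∀ b ∈ q.map (· + (j-1)), j ≤ b := by
          intro b hb
          rcases List.mem_map.mp hb with ⟨y, hy, rfl⟩
          have := hqent y hy
          omega
        refine ⟨hpsort, ?_, ?_⟩
        · rw [List.pairwise_cons]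
          refine ⟨hmapmem, ?_⟩
          exact List.Pairwise.map _ (fun x y h => by omega) hqsort
        · intro x hx b hb
          have hx' : x ≤ j - 1 := (hpent x hx).2
          rcases List.mem_cons.mp hb with rfl | hb
          · omega
          · have := hmapmem b hb; omega
    rw [Finset.mem_coe, Finset.mem_filter]
    refine ⟨hmem, ?_⟩
    rw [lastTouch, Nat.findGreatest_eq_iff]
    refine ⟨by omega, fun _ => ⟨by omega, (hget (j-1) (by omega)).2.1 rfl⟩, ?_⟩
    intro i hji hiN hPi
    have h2 := (hget (i-1) (by omega)).2.2 (by omega)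
    have := hqstD (i - 1 - j) (by omega)
    omega
  · -- backward membership
    intro a ha
    rw [Finset.mem_coe, Finset.mem_filter] at ha
    obtain ⟨hast, hlt⟩ := ha
    obtain ⟨⟨halen, haent⟩, hasort, hastair⟩ := mem_st.mp hast
    have haentD := forall_mem_iff_getD.mp haent
    rw [lastTouch, Nat.findGreatest_eq_iff] at hlt
    obtain ⟨hjn, hPj, hgt⟩ := hlt
    -- it only remains to show j ≥ 1 from P... j could be 0? if findGreatest = 0.
    -- j ∈ Icc 1 (n+1) given, so j ≥ 1.
    have hj1 : 1 ≤ j := hj.1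
    have hPj' := hPj (by omega)
    have htouch : a.getD (j-1) 0 = j := hPj'.2
    have hub : ∀ m, j ≤ m → m ≤ n → a.getD m 0 ≤ m := by
      intro m hm1 hm2
      have h1 := hastair m (by omega)
      have h2 := hgt (n := m+1) (by omega) (by omega)
      simp only [not_and] at h2
      have h3 : a.getD m 0 ≠ m + 1 := by simpa using h2 (by omega)
      omega
    rw [Finset.mem_coe, Finset.mem_product]
    constructor
    · rw [mem_st]
      have htlen : (a.take (j-1)).length = j - 1 := by simp; omega
      refine ⟨⟨htlen, ?_⟩, ?_, ?_⟩
      · rw [forall_mem_iff_getD]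
        intro m hm
        rw [htlen] at hm
        rw [getD_take _ _ _ hm (by omega)]
        have := hastair m (by omega)
        have := haentD m (by omega)
        omega
      · exact List.Pairwise.sublist (List.take_sublist _ _) hasort
      · intro m hm
        rw [getD_take _ _ _ hm (by omega)]
        exact hastair m (by omega)
    · rw [mem_st]
      have hdlen : ((a.drop j).map (· - (j-1))).length = n + 1 - j := by simp; omega
      have hdget : ∀ t, t < n + 1 - j →
          ((a.drop j).map (· - (j-1))).getD t 0 = a.getD (j + t) 0 - (j-1) := by
        intro t ht
        rw [getD_map_sub _ _ _ (by simp; omega), getD_drop _ _ _ (by omega)]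
      have hlow : ∀ t, t < n + 1 - j → j ≤ a.getD (j + t) 0 := by
        intro t ht
        calc j = a.getD (j-1) 0 := htouch.symm
        _ ≤ a.getD (j+t) 0 := sorted_getD_mono hasort (by omega) (by omega)
      refine ⟨⟨hdlen, ?_⟩, ?_, ?_⟩
      · rw [forall_mem_iff_getD]
        intro t ht
        rw [hdlen] at ht
        rw [hdget t ht]
        have h1 := hlow t ht
        have h2 := hub (j+t) (by omega) (by omega)
        omega
      · apply List.Pairwise.map _ (fun x y h => by omega : ∀ x y : ℕ, x ≤ y → x - (j-1) ≤ y - (j-1))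
        exact List.Pairwise.sublist (List.drop_sublist _ _) hasort
      · intro t ht
        rw [hdget t ht]
        have h1 := hlow t ht
        have h2 := hub (j+t) (by omega) (by omega)
        omega
  · -- left inverse
    rintro ⟨p, q⟩ hpq
    rw [Finset.mem_coe, Finset.mem_product] at hpq
    obtain ⟨⟨hplen, hpent⟩, -, -⟩ := mem_st.mp hpq.1
    obtain ⟨⟨hqlen, hqent⟩, -, -⟩ := mem_st.mp hpq.2
    dsimp only at hplen hpent hqlen hqent ⊢
    simp only [Prod.mk.injEq]
    constructor
    · rw [List.take_left' hplen]
    · rw [List.append_cons, List.drop_left' (by simp [hplen]; omega), List.map_map]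
      rw [List.map_congr_left (g := id) (fun x _ => by simp), List.map_id]
  · -- right inverse
    intro a ha
    rw [Finset.mem_coe, Finset.mem_filter] at ha
    obtain ⟨hast, hlt⟩ := ha
    obtain ⟨⟨halen, haent⟩, hasort, hastair⟩ := mem_st.mp hast
    rw [lastTouch, Nat.findGreatest_eq_iff] at hlt
    have hj1 : 1 ≤ j := hj.1
    have htouch : a.getD (j-1) 0 = j := (hlt.2.1 (by omega)).2
    have hdmem : ∀ x ∈ a.drop j, j ≤ x := by
      rw [forall_mem_iff_getD]
      intro t ht
      rw [List.length_drop] at ht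
      rw [getD_drop _ _ _ (by omega)]
      calc j = a.getD (j-1) 0 := htouch.symm
      _ ≤ a.getD (j+t) 0 := sorted_getD_mono hasort (by omega) (by omega)
    dsimp only
    rw [List.map_map, List.map_congr_left (g := id) (fun x hx => by
        have := hdmem x hx
        show x - (j-1) + (j-1) = x
        omega), List.map_id]
    have hgetelem : a[j-1]'(by omega) = j := by
      rw [← List.getD_eq_getElem a 0 (by omega)]; exact htouch
    have hsucc : j - 1 + 1 = j := by omega
    calc a.take (j-1) ++ j :: a.drop j
        = a.take (j-1) ++ (a[j-1]'(by omega)) :: a.drop ((j-1)+1) := by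
          rw [hgetelem, hsucc]
      _ = a.take (j-1) ++ a.drop (j-1) := by rw [List.getElem_cons_drop]
      _ = a := List.take_append_drop _ _

lemma st_card : ∀ i, (st i).card = catalan i := by
  intro i
  induction i using Nat.strong_induction_on with
  | _ i ih =>
    match i with
    | 0 =>
      have : st 0 = {[]} := by
        ext a
        rw [mem_st, Finset.mem_singleton]
        constructor
        · rintro ⟨⟨h, -⟩, -⟩; exact List.length_eq_zero_iff.mp h
        · rintro rfl; refine ⟨⟨rfl, by simp⟩, by simp, by omega⟩
      rw [this, Finset.card_singleton, catalan_zero]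
    | n+1 =>
      have hfib := Finset.card_eq_sum_card_fiberwise
        (f := lastTouch (n+1)) (s := st (n+1)) (t := Finset.Icc 1 (n+1)) ?_
      · rw [hfib]
        have hsum : ∀ j ∈ Finset.Icc 1 (n+1),
            ((st (n+1)).filter (fun a => lastTouch (n+1) a = j)).card
              = catalan (j-1) * catalan (n+1-j) := by
          intro j hj
          rw [st_fiber_card n j hj, Finset.card_product,
            ih (j-1) (by rw [Finset.mem_Icc] at hj; omega),
            ih (n+1-j) (by rw [Finset.mem_Icc] at hj; omega)]
        rw [Finset.sum_congr rfl hsum, catalan_succ, Fin.sum_univ_eq_sum_range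
          (fun i => catalan i * catalan (n - i)) (n+1)]
        symm
        apply Finset.sum_nbij' (fun i => i + 1) (fun j => j - 1)
        · intro a ha; rw [Finset.mem_range] at ha; rw [Finset.mem_Icc]; omega
        · intro a ha; rw [Finset.mem_Icc] at ha; rw [Finset.mem_range]; omega
        · intro a _; omega
        · intro a ha; rw [Finset.mem_Icc] at ha; omega
        · intro a ha
          rw [Finset.mem_range] at ha
          have h1 : a + 1 - 1 = a := by omega
          have h2 : n + 1 - (a + 1) = n - a := by omega
          rw [h1, h2]
      · intro a ha
        obtain ⟨⟨halen, haent⟩, hasort, hastair⟩ := mem_st.mp ha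
        rw [Finset.mem_coe, Finset.mem_Icc]
        have h0 : a.getD 0 0 = 1 := by
          have h1 := hastair 0 (by omega)
          have h2 := (forall_mem_iff_getD.mp haent) 0 (by omega)
          omega
        constructor
        · exact Nat.le_findGreatest (by omega) ⟨le_rfl, by simpa using h0⟩
        · exact Nat.findGreatest_le _

lemma flaws_eq_iff_good (n k : ℕ) (hk : 1 ≤ k) (hn : k+1 ≤ n) (a : List ℕ)
    (hlen : a.length = n) (hent : ∀ x ∈ a, 1 ≤ x ∧ x ≤ n) (hsort : a.Pairwise (· ≤ ·)) :
    flaws n a = k ↔ Good k n a := by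
  rw [flaws_eq_sim n a hsort (fun x hx => (hent x hx).1)]
  exact sim_eq_iff_good n k hk hn a hlen hent hsort

/-- ordered preference sets of length `n` with exactly `k` flaws, as a finset. -/
def AF (n k : ℕ) : Finset (List ℕ) :=
  (listsF n n).filter (fun a => a.Pairwise (· ≤ ·) ∧ Good k n a)

/-- those with leading term 1. -/
def BF (n k : ℕ) : Finset (List ℕ) :=
  (listsF n n).filter (fun a => (a.Pairwise (· ≤ ·) ∧ Good k n a) ∧ a.head? = some 1)

/-- those with leading term different from 1. -/
def TF (n k : ℕ) : Finset (List ℕ) :=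
  (listsF n n).filter (fun a => (a.Pairwise (· ≤ ·) ∧ Good k n a) ∧ ¬(a.head? = some 1))

lemma opEq_eq_card (n k : ℕ) (hk : 1 ≤ k) (hn : k+1 ≤ n) : opEq n k = (AF n k).card := by
  rw [opEq, ← Set.ncard_coe_finset]
  congr 1
  ext a
  simp only [Set.mem_setOf_eq, Finset.coe_filter, AF, mem_listsF, IsOrderedPrefSet, IsPrefSet]
  constructor
  · rintro ⟨⟨⟨h1, h2⟩, h3⟩, h4⟩
    exact ⟨⟨h1, h2⟩, h3, (flaws_eq_iff_good n k hk hn a h1 h2 h3).mp h4⟩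
  · rintro ⟨⟨h1, h2⟩, h3, h4⟩
    exact ⟨⟨⟨h1, h2⟩, h3⟩, (flaws_eq_iff_good n k hk hn a h1 h2 h3).mpr h4⟩

lemma opLead_eq_card (n k : ℕ) (hk : 1 ≤ k) (hn : k+1 ≤ n) : opLead n k 1 = (BF n k).card := by
  rw [opLead, ← Set.ncard_coe_finset]
  congr 1
  ext a
  simp only [Set.mem_setOf_eq, Finset.coe_filter, BF, mem_listsF, IsOrderedPrefSet, IsPrefSet]
  constructor
  · rintro ⟨⟨⟨h1, h2⟩, h3⟩, h4, h5⟩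
    exact ⟨⟨h1, h2⟩, ⟨h3, (flaws_eq_iff_good n k hk hn a h1 h2 h3).mp h4⟩, h5⟩
  · rintro ⟨⟨h1, h2⟩, ⟨h3, h4⟩, h5⟩
    exact ⟨⟨⟨h1, h2⟩, h3⟩, (flaws_eq_iff_good n k hk hn a h1 h2 h3).mpr h4, h5⟩

lemma AF_card_split (n k : ℕ) : (AF n k).card = (BF n k).card + (TF n k).card := by
  have h1 : BF n k = (AF n k).filter (fun a => a.head? = some 1) := by
    rw [BF, AF, Finset.filter_filter]
  have h2 : TF n k = (AF n k).filter (fun a => ¬(a.head? = some 1)) := by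
    rw [TF, AF, Finset.filter_filter]
  rw [h1, h2]
  exact (Finset.card_filter_add_card_filter_not _).symm

lemma head?_getD (a : List ℕ) (h : 0 < a.length) : a.head? = some (a.getD 0 0) := by
  match a with
  | [] => simp at h
  | x :: l => simp

/-- statistic: length of maximal staircase prefix. -/
def preIdx (n k : ℕ) (a : List ℕ) : ℕ :=
  Nat.findGreatest (fun j => ∀ m, m < j → a.getD m 0 ≤ m + 1) (n - k - 1)

lemma BF_fiber_card (n k : ℕ) (hk : 1 ≤ k) (hn : k + 1 ≤ n) (i : ℕ)
    (hi : i ∈ Finset.Icc 1 (n-k-1)) :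
    ((BF n k).filter (fun a => preIdx n k a = i)).card = ((st i) ×ˢ (TF (n-i) k)).card := by
  rw [Finset.mem_Icc] at hi
  symm
  apply Finset.card_nbij' (fun x => x.1 ++ (x.2.map (· + i)))
    (fun a => (a.take i, (a.drop i).map (· - i)))
  · -- forward membership
    rintro ⟨p, q⟩ hpq
    rw [Finset.mem_coe, Finset.mem_product] at hpq
    obtain ⟨⟨hplen, hpent⟩, hpsort, hpst⟩ := mem_st.mp hpq.1
    obtain ⟨hqmem, ⟨hqsort, hqgood⟩, hqhead⟩ := Finset.mem_filter.mp hpq.2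
    obtain ⟨hqlen, hqent⟩ := mem_listsF.mp hqmem
    dsimp only at hplen hpent hpsort hpst hqlen hqent hqsort hqgood hqhead ⊢
    set a := p ++ (q.map (· + i)) with ha
    have hqentD := forall_mem_iff_getD.mp hqent
    have hpentD := forall_mem_iff_getD.mp hpent
    have hq0 : 2 ≤ q.getD 0 0 := by
      have h1 : 0 < q.length := by omega
      rw [head?_getD q h1] at hqhead
      have := hqentD 0 h1
      simp only [Option.some.injEq] at hqhead
      omega
    have halen : a.length = n := by simp [ha, hplen, hqlen]; omega
    have hget : ∀ m, m < n →
        (m < i → a.getD m 0 = p.getD m 0) ∧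
        (i ≤ m → a.getD m 0 = q.getD (m - i) 0 + i) := by
      intro m hm
      constructor
      · intro h; rw [ha, getD_append_lt _ _ _ (by omega)]
      · intro h
        rw [ha, getD_append_ge _ _ _ (by omega)
          (by simp only [List.length_append, List.length_map, hplen, hqlen]; omega), hplen]
        rw [getD_map_add _ _ _ (by omega)]
    have hmem : a ∈ BF n k := by
      rw [BF, Finset.mem_filter, mem_listsF]
      refine ⟨⟨halen, ?_⟩, ⟨?_, ?_, ?_⟩, ?_⟩
      · rw [forall_mem_iff_getD]
        intro m hm
        rw [halen] at hm
        rcases Nat.lt_or_ge m i with h | h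
        · have := (hget m hm).1 h
          have h2 := hpentD m (by omega)
          omega
        · have := (hget m hm).2 h
          have h2 := hqentD (m - i) (by omega)
          omega
      · rw [ha, List.pairwise_append]
        have hmapmem : ∀ b ∈ q.map (· + i), i + 1 ≤ b := by
          intro b hb
          rcases List.mem_map.mp hb with ⟨y, hy, rfl⟩
          have := hqent y hy
          omega
        refine ⟨hpsort, List.Pairwise.map _ (fun x y h => by omega) hqsort, ?_⟩
        intro x hx b hb
        have hx' : x ≤ i := (hpent x hx).2
        have := hmapmem b hb
        omega
      · -- first part of Good
        intro m hm
        rcases Nat.lt_or_ge m i with h | h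
        · have := (hget m (by omega)).1 h
          have := hpst m (by omega)
          omega
        · have := (hget m (by omega)).2 h
          have := hqgood.1 (m - i) (by omega)
          omega
      · -- witness of Good
        obtain ⟨t, ht1, ht2⟩ := hqgood.2
        refine ⟨i + t, by omega, ?_⟩
        have := (hget (i+t) (by omega)).2 (by omega)
        have h2 : i + t - i = t := by omega
        rw [this, h2, ht2]
        omega
      · -- head
        rw [head?_getD a (by omega)]
        have h1 := (hget 0 (by omega)).1 (by omega)
        have h2 := hpst 0 (by omega)
        have h3 := hpentD 0 (by omega)
        simp only [Option.some.injEq]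
        omega
    rw [Finset.mem_coe, Finset.mem_filter]
    refine ⟨hmem, ?_⟩
    rw [preIdx, Nat.findGreatest_eq_iff]
    refine ⟨by omega, fun _ m hm => by
      have := (hget m (by omega)).1 hm
      have := hpst m hm
      omega, ?_⟩
    intro i' hii' hi'N hPi'
    have h1 := hPi' i (by omega)
    have h2 := (hget i (by omega)).2 le_rfl
    have h3 : i - i = 0 := by omega
    rw [h3] at h2
    omega
  · -- backward membership
    intro a ha
    rw [Finset.mem_coe, Finset.mem_filter] at ha
    obtain ⟨haB, hpre⟩ := ha
    rw [BF, Finset.mem_filter, mem_listsF] at haB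
    obtain ⟨⟨halen, haent⟩, ⟨hasort, hagood⟩, hahead⟩ := haB
    have haentD := forall_mem_iff_getD.mp haent
    rw [preIdx, Nat.findGreatest_eq_iff] at hpre
    obtain ⟨hiN, hPi, hgt⟩ := hpre
    have hPi' : ∀ m, m < i → a.getD m 0 ≤ m + 1 := hPi (by omega)
    -- a.getD i 0 ≥ i + 2
    have hai : i + 2 ≤ a.getD i 0 := by
      have hnP : ¬ (∀ m, m < i + 1 → a.getD m 0 ≤ m + 1) := by
        rcases Nat.lt_or_ge (i+1) (n-k-1+1) with h | h
        · intro hP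
          exact hgt (n := i+1) (by omega) (by omega) hP
        · -- i = n-k-1; use the Good witness
          obtain ⟨m, hm1, hm2⟩ := hagood.2
          intro hP
          have := hP m (by omega)
          omega
      push_neg at hnP
      obtain ⟨m, hm1, hm2⟩ := hnP
      rcases Nat.lt_or_ge m i with h | h
      · exact absurd (hPi' m h) (by omega)
      · have : m = i := by omega
        subst this
        omega
    rw [Finset.mem_coe, Finset.mem_product]
    constructor
    · rw [mem_st]
      have htlen : (a.take i).length = i := by simp; omega
      refine ⟨⟨htlen, ?_⟩, List.Pairwise.sublist (List.take_sublist _ _) hasort, ?_⟩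
      · rw [forall_mem_iff_getD]
        intro m hm
        rw [htlen] at hm
        rw [getD_take _ _ _ hm (by omega)]
        have := hPi' m hm
        have := haentD m (by omega)
        omega
      · intro m hm
        rw [getD_take _ _ _ hm (by omega)]
        exact hPi' m hm
    · rw [TF, Finset.mem_filter, mem_listsF]
      have hdlen : ((a.drop i).map (· - i)).length = n - i := by simp; omega
      have hdget : ∀ t, t < n - i → ((a.drop i).map (· - i)).getD t 0 = a.getD (i + t) 0 - i := by
        intro t ht
        rw [getD_map_sub _ _ _ (by simp; omega), getD_drop _ _ _ (by omega)]
      have hlow : ∀ t, t < n - i → i + 2 ≤ a.getD (i + t) 0 := by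
        intro t ht
        calc i + 2 ≤ a.getD i 0 := hai
        _ ≤ a.getD (i+t) 0 := sorted_getD_mono hasort (by omega) (by omega)
      refine ⟨⟨hdlen, ?_⟩, ⟨?_, ?_, ?_⟩, ?_⟩
      · rw [forall_mem_iff_getD]
        intro t ht
        rw [hdlen] at ht
        rw [hdget t ht]
        have h1 := hlow t ht
        have h2 := haentD (i+t) (by omega)
        omega
      · apply List.Pairwise.map _ (fun x y h => by omega : ∀ x y : ℕ, x ≤ y → x - i ≤ y - i)
        exact List.Pairwise.sublist (List.drop_sublist _ _) hasort
      · -- Good first part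
        intro t ht
        rw [hdget t (by omega)]
        have := hagood.1 (i + t) (by omega)
        omega
      · -- Good witness
        obtain ⟨m, hm1, hm2⟩ := hagood.2
        have hmi : i ≤ m := by
          by_contra h
          have := hPi' m (by omega)
          omega
        refine ⟨m - i, by omega, ?_⟩
        rw [hdget (m - i) (by omega)]
        have : i + (m - i) = m := by omega
        rw [this, hm2]
        omega
      · -- head ≠ 1
        rw [head?_getD ((a.drop i).map (· - i)) (by rw [hdlen]; omega)]
        rw [hdget 0 (by omega)]
        have := hlow 0 (by omega)
        simp only [Option.some.injEq]
        omega
  · -- left inverse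
    rintro ⟨p, q⟩ hpq
    rw [Finset.mem_coe, Finset.mem_product] at hpq
    obtain ⟨⟨hplen, hpent⟩, -, -⟩ := mem_st.mp hpq.1
    dsimp only at hplen hpent ⊢
    simp only [Prod.mk.injEq]
    constructor
    · rw [List.take_left' hplen]
    · rw [List.drop_left' (by simp [hplen]), List.map_map]
      rw [List.map_congr_left (g := id) (fun x _ => by
        show x + i - i = x
        omega), List.map_id]
  · -- right inverse
    intro a ha
    rw [Finset.mem_coe, Finset.mem_filter] at ha
    obtain ⟨haB, hpre⟩ := ha
    rw [BF, Finset.mem_filter, mem_listsF] at haB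
    obtain ⟨⟨halen, haent⟩, ⟨hasort, hagood⟩, hahead⟩ := haB
    rw [preIdx, Nat.findGreatest_eq_iff] at hpre
    obtain ⟨hiN, hPi, hgt⟩ := hpre
    have hPi' : ∀ m, m < i → a.getD m 0 ≤ m + 1 := hPi (by omega)
    have hai : i + 2 ≤ a.getD i 0 := by
      have hnP : ¬ (∀ m, m < i + 1 → a.getD m 0 ≤ m + 1) := by
        rcases Nat.lt_or_ge (i+1) (n-k-1+1) with h | h
        · intro hP
          exact hgt (n := i+1) (by omega) (by omega) hP
        · obtain ⟨m, hm1, hm2⟩ := hagood.2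
          intro hP
          have := hP m (by omega)
          omega
      push_neg at hnP
      obtain ⟨m, hm1, hm2⟩ := hnP
      rcases Nat.lt_or_ge m i with h | h
      · exact absurd (hPi' m h) (by omega)
      · have : m = i := by omega
        subst this
        omega
    have hdmem : ∀ x ∈ a.drop i, i ≤ x := by
      rw [forall_mem_iff_getD]
      intro t ht
      rw [List.length_drop] at ht
      rw [getD_drop _ _ _ (by omega)]
      have : a.getD i 0 ≤ a.getD (i+t) 0 := sorted_getD_mono hasort (by omega) (by omega)
      omega
    dsimp only
    rw [List.map_map, List.map_congr_left (g := id) (fun x hx => by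
        have := hdmem x hx
        show x - i + i = x
        omega), List.map_id]
    exact List.take_append_drop _ _

lemma BF_card (n k : ℕ) (hk : 1 ≤ k) (hn : k + 1 ≤ n) :
    (BF n k).card = ∑ i ∈ Finset.Icc 1 (n-k-1), catalan i * (TF (n-i) k).card := by
  rw [Finset.card_eq_sum_card_fiberwise (f := preIdx n k) (t := Finset.Icc 1 (n-k-1)) ?_]
  · refine Finset.sum_congr rfl (fun i hi => ?_)
    rw [BF_fiber_card n k hk hn i hi, Finset.card_product, st_card]
  · intro a ha
    rw [Finset.mem_coe, BF, Finset.mem_filter, mem_listsF] at ha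
    obtain ⟨⟨halen, haent⟩, ⟨hasort, hagood⟩, hahead⟩ := ha
    rw [head?_getD a (by omega), Option.some.injEq] at hahead
    rw [Finset.mem_coe, Finset.mem_Icc]
    refine ⟨?_, Nat.findGreatest_le _⟩
    have hnk : 1 ≤ n - k - 1 := by
      by_contra h
      obtain ⟨m, hm1, hm2⟩ := hagood.2
      have : m = 0 := by omega
      subst this
      omega
    exact Nat.le_findGreatest hnk (fun m hm => by
      have : m = 0 := by omega
      subst this
      omega)

theorem stmt18 (n k : ℕ) (hk : 1 ≤ k) (hn : k + 1 ≤ n) :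
    opEq n k = ∑ i ∈ Finset.range (n - k), catalan i * (opEq (n - i) k - opLead (n - i) k 1) ∧
    opLead n k 1
      = ∑ i ∈ Finset.Icc 1 (n - k - 1), catalan i * (opEq (n - i) k - opLead (n - i) k 1) := by
  have key : ∀ m, k+1 ≤ m → opEq m k - opLead m k 1 = (TF m k).card := by
    intro m hm
    rw [opEq_eq_card m k hk hm, opLead_eq_card m k hk hm]
    have := AF_card_split m k
    omega
  have h2 : opLead n k 1
      = ∑ i ∈ Finset.Icc 1 (n-k-1), catalan i * (opEq (n-i) k - opLead (n-i) k 1) := by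
    rw [opLead_eq_card n k hk hn, BF_card n k hk hn]
    refine Finset.sum_congr rfl (fun i hi => ?_)
    rw [Finset.mem_Icc] at hi
    rw [key (n-i) (by omega)]
  refine ⟨?_, h2⟩
  have hins : Finset.range (n-k) = insert 0 (Finset.Icc 1 (n-k-1)) := by
    ext x
    simp only [Finset.mem_range, Finset.mem_insert, Finset.mem_Icc]
    omega
  rw [hins, Finset.sum_insert (by simp), ← h2]
  simp only [Nat.sub_zero, catalan_zero, one_mul]
  have h3 := key n hn
  have h4 := AF_card_split n k
  have h5 := opEq_eq_card n k hk hn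
  have h6 := opLead_eq_card n k hk hn
  omega
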